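/- Let G be a non-degenerate finite poc set over Σ and let S, T ⊆ Σ be forward-closed G-coherent sets. Then every u ∈ ⟨S;G⟩ satisfies Δ(u, ⟨T;G⟩) ≤ |T ∖ S|, where Δ(u, K) = min_{v ∈ K} |u ∖ v|. -/

import Mathlib

universe u v

structure PCS (α : Type*) where
  star : α → α
  zero : α
  star_star : ∀ a, star (star a) = a
  star_ne_self : ∀ a, star a ≠ a

variable {α : Type*}

/-- A pointed complemented relation (PCR) over the PCS `P`. -/
def IsPCR (P : PCS α) (G : Set (α × α)) : Prop :=
  (∀ a, (P.zero, a) ∈ G) ∧ ∀ a b, (a, b) ∈ G ↔ (P.star b, P.star a) ∈ G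

/-- `a ≤_G b`: the reflexive-transitive closure of the relation `G`. -/
def pcrLe (G : Set (α × α)) (a b : α) : Prop :=
  Relation.ReflTransGen (fun x y => (x, y) ∈ G) a b

/-- A set `S` is `G`-coherent if no `a, b ∈ S` satisfy `a ≤_G b*`. -/
def Coherent (P : PCS α) (G : Set (α × α)) (S : Set α) : Prop :=
  ∀ a ∈ S, ∀ b ∈ S, ¬ pcrLe G a (P.star b)

/-- Forward closure `↑S = {b | ∃ a ∈ S, a ≤_G b}`. -/
def upClosure (G : Set (α × α)) (S : Set α) : Set α :=
  {b | ∃ a ∈ S, pcrLe G a b}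

/-- Maximal `G`-coherent subsets; the members of the dual space `G°`. -/
def MaxCoherent (P : PCS α) (G : Set (α × α)) (S : Set α) : Prop :=
  Coherent P G S ∧ ∀ T, Coherent P G T → S ⊆ T → S = T

/-- `G` is non-degenerate: no `a` satisfies both `a ≤_G a*` and `a* ≤_G a`. -/
def Nondegenerate (P : PCS α) (G : Set (α × α)) : Prop :=
  ∀ a, ¬ (pcrLe G a (P.star a) ∧ pcrLe G (P.star a) a)

/-- A complete `*`-selection: exactly one of `a`, `a*` belongs to `S`, for each `a`. -/
def CompleteSel (P : PCS α) (S : Set α) : Prop :=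
  ∀ a, Xor' (a ∈ S) (P.star a ∈ S)

/-- The half-space `⟨S;G⟩ = {u ∈ G° : S ⊆ u}`. -/
def halfspace (P : PCS α) (G : Set (α × α)) (S : Set α) : Set (Set α) :=
  {u | MaxCoherent P G u ∧ S ⊆ u}

/-- Coherent projection `coh_G(T) = ↑T ∖ (↑T)*`. -/
def cohProj (P : PCS α) (G : Set (α × α)) (T : Set α) : Set α :=
  upClosure G T \ (P.star '' upClosure G T)

/-- Morphisms of PCRs. -/
def IsPCRHom {β : Type*} (P : PCS α) (Q : PCS β) (G : Set (α × α)) (H : Set (β × β))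
    (f : α → β) : Prop :=
  f P.zero = Q.zero ∧ (∀ a, f (P.star a) = Q.star (f a)) ∧
    ∀ a b, (a, b) ∈ G → pcrLe H (f a) (f b)

/-- A poc set: a PCR whose induced relation `≤_G` is antisymmetric and whose only
negligible element is `0`. -/
def IsPocSet (P : PCS α) (G : Set (α × α)) : Prop :=
  IsPCR P G ∧ (∀ a b, pcrLe G a b → pcrLe G b a → a = b) ∧
    ∀ a, pcrLe G a (P.star a) → a = P.zero

/-- Divergence bound: every `u ∈ ⟨S;G⟩` is within Hamming distance `|T ∖ S|`
of `⟨T;G⟩`. -/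
theorem stmt10 [Finite α] (P : PCS α) (G : Set (α × α)) (hG : IsPocSet P G)
    (S T : Set α) (hS : Coherent P G S) (hSup : upClosure G S = S)
    (hT : Coherent P G T) (hTup : upClosure G T = T)
    (u : Set α) (hu : u ∈ halfspace P G S) :
    ∃ v ∈ halfspace P G T, (u \ v).ncard ≤ (T \ S).ncard := by
  obtain ⟨⟨hucoh, _⟩, hSu⟩ := hu
  have hstar_inj : Function.Injective P.star :=
    Function.LeftInverse.injective P.star_star
  -- duality of pcrLe
  have dual : ∀ a b : α, pcrLe G a b → pcrLe G (P.star b) (P.star a) := by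
    intro a b h
    induction h with
    | refl => exact Relation.ReflTransGen.refl
    | tail hbc hG' ih =>
      exact Relation.ReflTransGen.head ((hG.1.2 _ _).mp hG') ih
  set w : Set α := T ∪ (u \ P.star '' T) with hw
  have hwcoh : Coherent P G w := by
    intro a ha b hb hab
    rcases ha with haT | ⟨hau, haN⟩ <;> rcases hb with hbT | ⟨hbu, hbN⟩
    · exact hT a haT b hbT hab
    · -- a ∈ T, b ∈ u \ star''T : star b ∈ upClosure T = T
      have : P.star b ∈ upClosure G T := ⟨a, haT, hab⟩
      rw [hTup] at this
      exact hbN ⟨P.star b, this, P.star_star b⟩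
    · -- a ∈ u \ star''T, b ∈ T : b ≤ star a so star a ∈ T
      have hd := dual _ _ hab
      rw [P.star_star] at hd
      have : P.star a ∈ upClosure G T := ⟨b, hbT, hd⟩
      rw [hTup] at this
      exact haN ⟨P.star a, this, P.star_star a⟩
    · exact hucoh a hau b hbu hab
  -- extend w to a maximal coherent set
  have hfin : ({x : Set α | Coherent P G x ∧ w ⊆ x}).Finite := Set.toFinite _
  obtain ⟨v, hv, hvmax⟩ := Set.Finite.exists_maximalFor id _ hfin
    ⟨w, hwcoh, subset_rfl⟩
  have hvMax : MaxCoherent P G v := by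
    refine ⟨hv.1, fun X hX hsub => ?_⟩
    exact Set.Subset.antisymm hsub (hvmax ⟨hX, hv.2.trans hsub⟩ hsub)
  have hTv : T ⊆ v := (Set.subset_union_left).trans hv.2
  refine ⟨v, ⟨hvMax, hTv⟩, ?_⟩
  -- the bound
  have hsub : u \ v ⊆ P.star '' (T \ u) := by
    rintro a ⟨hau, hav⟩
    have haw : a ∉ w := fun h => hav (hv.2 h)
    have : a ∈ P.star '' T := by
      by_contra hc
      exact haw (Or.inr ⟨hau, hc⟩)
    obtain ⟨t, htT, rfl⟩ := this
    refine ⟨t, ⟨htT, fun htu => ?_⟩, rfl⟩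
    have := hucoh t htu (P.star t) hau
    rw [P.star_star] at this
    exact this Relation.ReflTransGen.refl
  calc (u \ v).ncard ≤ (P.star '' (T \ u)).ncard :=
        Set.ncard_le_ncard hsub (Set.toFinite _)
    _ = (T \ u).ncard := Set.ncard_image_of_injective _ hstar_inj
    _ ≤ (T \ S).ncard :=
        Set.ncard_le_ncard (Set.diff_subset_diff_right hSu) (Set.toFinite _)
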